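/- The kernel of the restriction ρ_k of Λ^k to Sp(V) (V finite-dimensional symplectic over a field of characteristic zero, 0 < k < dim V) is {1} if k is odd and {1, -1} if k is even. -/

import Mathlib

open ExteriorAlgebra

/-- The endomorphism of the `k`-th exterior power induced by an endomorphism. -/
noncomputable def extPow {R M : Type*} [CommRing R] [AddCommGroup M] [Module R M]
    (k : ℕ) (f : M →ₗ[R] M) : Module.End R (⋀[R]^k M) :=
  (ExteriorAlgebra.map f).toLinearMap.restrict (p := ⋀[R]^k M) (q := ⋀[R]^k M) (fun x hx => by
    have mono : ∀ (j : ℕ) (A B : Submodule R (ExteriorAlgebra R M)), A ≤ B → A ^ j ≤ B ^ j := by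
      intro j A B h
      induction j with
      | zero => exact le_rfl
      | succ n ih => rw [pow_succ, pow_succ]; exact mul_le_mul' ih h
    have h1 : Submodule.map (ExteriorAlgebra.map f).toLinearMap (⋀[R]^k M) ≤ ⋀[R]^k M := by
      rw [exteriorPower, Submodule.map_pow, ι_range_map_map]
      refine mono _ _ _ ?_
      rintro z hz
      obtain ⟨y, -, rfl⟩ := hz
      exact LinearMap.mem_range_self _ y
    exact h1 ⟨x, hx, rfl⟩)

section Aux

variable {K : Type*} [Field K] {V : Type*} [AddCommGroup V] [Module K V]

/-- Detection alternating form attached to a basis and a tuple of indices. -/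
noncomputable def detForm {ι : Type*} (b : Module.Basis ι K V) {m : ℕ} (σ : Fin m → ι) :
    V [⋀^Fin m]→ₗ[K] K :=
  (Matrix.detRowAlternating).compLinearMap (LinearMap.pi fun i => b.coord (σ i))

lemma detForm_apply {ι : Type*} (b : Module.Basis ι K V) {m : ℕ} (σ : Fin m → ι) (v : Fin m → V) :
    detForm b σ v = Matrix.det (Matrix.of fun i j => b.repr (v i) (σ j)) := rfl

lemma detForm_apply_basis {ι : Type*} (b : Module.Basis ι K V) {m : ℕ} {σ : Fin m → ι}
    (hσ : Function.Injective σ) : detForm b σ (fun i => b (σ i)) = 1 := by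
  classical
  rw [detForm_apply]
  have : (Matrix.of fun i j => b.repr (b (σ i)) (σ j)) = (1 : Matrix (Fin m) (Fin m) K) := by
    ext i j
    rw [Matrix.of_apply, Module.Basis.repr_self_apply, Matrix.one_apply]
    simp [hσ.eq_iff]
  rw [this, Matrix.det_one]

lemma detForm_eq_zero {ι : Type*} (b : Module.Basis ι K V) {m : ℕ} (σ : Fin m → ι) (v : Fin m → V)
    (i0 : Fin m) (h : ∀ t, b.repr (v i0) (σ t) = 0) : detForm b σ v = 0 := by
  rw [detForm_apply]
  exact Matrix.det_eq_zero_of_row_eq_zero i0 h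

/-- Linear functional on the exterior algebra detecting degree-`m` components. -/
noncomputable def detF {ι : Type*} (b : Module.Basis ι K V) {m : ℕ} (σ : Fin m → ι) :
    ExteriorAlgebra K V →ₗ[K] K :=
  ExteriorAlgebra.liftAlternating
    (Function.update (fun i => (0 : V [⋀^Fin i]→ₗ[K] K)) m (detForm b σ))

lemma detF_ιMulti {ι : Type*} (b : Module.Basis ι K V) {m : ℕ} (σ : Fin m → ι) (v : Fin m → V) :
    detF b σ (ιMulti K m v) = detForm b σ v := by
  rw [detF, ExteriorAlgebra.liftAlternating_apply_ιMulti, Function.update_self]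

lemma ιMulti_ne_zero {ι : Type*} (b : Module.Basis ι K V) {m : ℕ} {σ : Fin m → ι}
    (hσ : Function.Injective σ) : ιMulti K m (fun i => b (σ i)) ≠ 0 := by
  intro h
  have h0 := congrArg (detF b σ) h
  rw [map_zero, detF_ιMulti] at h0
  have h1 := detForm_apply_basis (b := b) hσ
  rw [h0] at h1
  exact one_ne_zero h1.symm


lemma ιMulti_cons {m : ℕ} (x : V) (w : Fin m → V) :
    ιMulti K (m + 1) (Fin.cons x w) = ExteriorAlgebra.ι K x * ιMulti K m w := by
  rw [ιMulti_succ_apply, Fin.cons_zero]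
  rfl

lemma repr_eq_zero_of_wedge {ι : Type*} [Fintype ι] (b : Module.Basis ι K V) {m : ℕ}
    {σ : Fin m → ι} (hσ : Function.Injective σ) {j : ι} (hj : j ∉ Set.range σ) {x : V}
    (h : ιMulti K (m + 1) (Fin.cons x (fun i => b (σ i))) = 0) : b.repr x j = 0 := by
  classical
  set w : Fin m → V := fun i => b (σ i) with hw
  set τ : Fin (m + 1) → ι := Fin.cons j σ with hτdef
  have hτ : Function.Injective τ := by
    intro a a' haa'
    induction a using Fin.cases with
    | zero =>
      induction a' using Fin.cases with
      | zero => rfl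
      | succ a' =>
        exfalso; apply hj
        rw [hτdef] at haa'
        simp only [Fin.cons_zero, Fin.cons_succ] at haa'
        exact ⟨a', haa'.symm⟩
    | succ a =>
      induction a' using Fin.cases with
      | zero =>
        exfalso; apply hj
        rw [hτdef] at haa'
        simp only [Fin.cons_zero, Fin.cons_succ] at haa'
        exact ⟨a, haa'⟩
      | succ a' =>
        rw [hτdef] at haa'
        simp only [Fin.cons_succ] at haa'
        rw [hσ haa']
  have h0 := congrArg (detF b τ) h
  rw [map_zero, detF_ιMulti] at h0
  -- expand `x` in the basis
  have hx : x = ∑ j' : ι, b.repr x j' • b j' := (b.sum_repr x).symm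
  have hstep : (Fin.cons x w : Fin (m + 1) → V)
      = Function.update (Fin.cons x w) 0 (∑ j' : ι, b.repr x j' • b j') := by
    rw [Fin.update_cons_zero, ← hx]
  have hexp : (detForm b τ) (Fin.cons x w)
      = ∑ j' : ι, b.repr x j' • (detForm b τ) (Fin.cons (b j') w) := by
    conv_lhs => rw [hstep]
    rw [AlternatingMap.map_update_sum]
    refine Finset.sum_congr rfl fun j' _ => ?_
    rw [AlternatingMap.map_update_smul, Fin.update_cons_zero]
  rw [hexp] at h0
  -- compute each term
  have hterm : ∀ j' : ι, j' ≠ j → (detForm b τ) (Fin.cons (b j') w) = 0 := by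
    intro j' hj'
    by_cases hr : j' ∈ Set.range σ
    · obtain ⟨s, rfl⟩ := hr
      refine AlternatingMap.map_eq_zero_of_eq _ _ (i := 0) (j := s.succ) ?_
        (Fin.succ_ne_zero s).symm
      rw [Fin.cons_zero, Fin.cons_succ]
    · refine detForm_eq_zero b τ _ 0 fun t => ?_
      rw [Fin.cons_zero, Module.Basis.repr_self_apply]
      rw [if_neg]
      intro he
      induction t using Fin.cases with
      | zero => exact hj' (by simpa [hτdef] using he)
      | succ t => exact hr ⟨t, by simpa [hτdef] using he.symm⟩
  have hvj : (detForm b τ) (Fin.cons (b j) w) = 1 := by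
    have : Fin.cons (b j) w = fun i => b (τ i) := by
      funext i
      induction i using Fin.cases with
      | zero => rw [Fin.cons_zero, hτdef, Fin.cons_zero]
      | succ i => rw [Fin.cons_succ, hτdef, Fin.cons_succ]
    rw [this]
    exact detForm_apply_basis b hτ
  have hz : ∀ j' ∈ (Finset.univ : Finset ι), j' ≠ j →
      b.repr x j' • (detForm b τ) (Fin.cons (b j') w) = 0 :=
    fun j' _ hj' => by rw [hterm j' hj', smul_zero]
  rw [Finset.sum_eq_single j hz (fun hjm => absurd (Finset.mem_univ j) hjm), hvj,
    smul_eq_mul, mul_one] at h0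
  exact h0

lemma extPow_eq_one_iff (k : ℕ) (f : Module.End K V) :
    extPow k f = 1 ↔ ∀ v : Fin k → V,
      ExteriorAlgebra.map f (ιMulti K k v) = ιMulti K k v := by
  constructor
  · intro h v
    have hmem : ιMulti K k v ∈ ⋀[K]^k V := ιMulti_range K k (Set.mem_range_self v)
    have := congrArg Subtype.val (LinearMap.congr_fun h ⟨ιMulti K k v, hmem⟩)
    simpa [extPow, LinearMap.restrict_apply] using this
  · intro h
    refine LinearMap.ext fun x => Subtype.ext ?_
    have hx : (x : ExteriorAlgebra K V) ∈
        Submodule.span K (Set.range (ιMulti K k (M := V))) := by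
      rw [ιMulti_span_fixedDegree]; exact x.2
    have hval : ∀ y ∈ Submodule.span K (Set.range (ιMulti K k (M := V))),
        ExteriorAlgebra.map f y = y := by
      intro y hy
      induction hy using Submodule.span_induction with
      | mem y hy => obtain ⟨v, rfl⟩ := hy; exact h v
      | zero => simp
      | add a b _ _ ha hb => rw [map_add, ha, hb]
      | smul c a _ ha => rw [map_smul, ha]
    have : (extPow k f x : ExteriorAlgebra K V) = ExteriorAlgebra.map f x := rfl
    rw [this, hval _ hx]
    rfl


lemma exists_sigma {ι : Type*} [Fintype ι] {k : ℕ} (hk : 0 < k)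
    (hcard : k + 1 ≤ Fintype.card ι) (i0 j : ι) (hij : i0 ≠ j) :
    ∃ σ : Fin k → ι, Function.Injective σ ∧ σ ⟨0, hk⟩ = i0 ∧ j ∉ Set.range σ := by
  classical
  obtain ⟨m, rfl⟩ : ∃ m, k = m + 1 := ⟨k - 1, (Nat.succ_pred_eq_of_pos hk).symm⟩
  obtain ⟨f⟩ : Nonempty (Fin (m + 2) ↪ ι) :=
    Function.Embedding.nonempty_of_card_le (by simp only [Fintype.card_fin]; omega)
  let e1 : Equiv.Perm ι := Equiv.swap (f 0) j
  let f1 : Fin (m + 2) → ι := fun i => e1 (f i)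
  have hf1 : Function.Injective f1 := e1.injective.comp f.injective
  have hf10 : f1 0 = j := by simp [f1, e1, Equiv.swap_apply_left]
  let e2 : Equiv.Perm ι := Equiv.swap (f1 1) i0
  let τ : Fin (m + 2) → ι := fun i => e2 (f1 i)
  have hτ : Function.Injective τ := e2.injective.comp hf1
  have hτ1 : τ 1 = i0 := by simp [τ, e2, Equiv.swap_apply_left]
  have hτ0 : τ 0 = j := by
    have h1 : j ≠ f1 1 := by
      rw [← hf10]; exact fun h => absurd (hf1 h) (by simp)
    have h2 : j ≠ i0 := hij.symm
    simp only [τ, hf10]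
    exact Equiv.swap_apply_of_ne_of_ne h1 h2
  refine ⟨fun i => τ i.succ, hτ.comp (Fin.succ_injective _), ?_, ?_⟩
  · show τ (Fin.succ ⟨0, hk⟩) = i0
    have h01 : Fin.succ (⟨0, hk⟩ : Fin (m + 1)) = 1 := by
      ext
      simp
    rw [h01, hτ1]
  · rintro ⟨i, hi⟩
    have hi' : τ i.succ = τ 0 := by rw [hτ0]; exact hi
    exact absurd (hτ hi') (Fin.succ_ne_zero i)

lemma eq_smul_one_of_forall {g : Module.End K V} [Nontrivial V]
    (hA : ∀ v : V, ∃ c : K, g v = c • v) : ∃ c : K, g = c • (1 : Module.End K V) := by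
  obtain ⟨v0, hv0⟩ := exists_ne (0 : V)
  obtain ⟨c, hc⟩ := hA v0
  refine ⟨c, LinearMap.ext fun w => ?_⟩
  show g w = c • w
  obtain ⟨cw, hcw⟩ := hA w
  by_cases hdep : ∃ a : K, w = a • v0
  · obtain ⟨a, rfl⟩ := hdep
    rw [map_smul, hc, smul_comm]
  · obtain ⟨c', hc'⟩ := hA (v0 + w)
    have h2 : c • v0 + cw • w = c' • v0 + c' • w := by
      rw [← hc, ← hcw, ← map_add, hc', smul_add]
    have key : (c - c') • v0 = (c' - cw) • w := by
      rw [sub_smul, sub_smul, sub_eq_sub_iff_add_eq_add]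
      rw [h2, add_comm]
    by_cases hcc : c' = cw
    · have : (c - c') • v0 = 0 := by rw [key, hcc, sub_self, zero_smul]
      rcases smul_eq_zero.1 this with h | h
      · have hccw : c = cw := (sub_eq_zero.1 h).trans hcc
        rw [hcw, ← hccw]
      · exact absurd h hv0
    · exfalso
      apply hdep
      refine ⟨(c' - cw)⁻¹ * (c - c'), ?_⟩
      rw [mul_smul, key, smul_smul, inv_mul_cancel₀ (sub_ne_zero.2 hcc), one_smul]

end Aux

/-- The kernel of $ρ_k : Sp(V) → GL(Λ^k V)$ is $\{1\}$ for $k$ odd and $\{±1\}$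
for $k$ even. -/
theorem kernel_extPow_symplectic {ℓ : ℕ} [Fact ℓ.Prime] {V : Type*} [AddCommGroup V]
    [Module ℚ_[ℓ] V] [FiniteDimensional ℚ_[ℓ] V] (B : LinearMap.BilinForm ℚ_[ℓ] V)
    (hB : B.Nondegenerate) (halt : ∀ x : V, B x x = 0)
    (k : ℕ) (hk : 0 < k) (hk' : k < Module.finrank ℚ_[ℓ] V)
    (g : Module.End ℚ_[ℓ] V) (hgbij : Function.Bijective g)
    (hgB : ∀ x y : V, B (g x) (g y) = B x y) :
    (Odd k → (extPow k g = 1 ↔ g = 1)) ∧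
    (Even k → (extPow k g = 1 ↔ g = 1 ∨ g = -1)) := by
    classical
  have hnt : Nontrivial V := (Module.finrank_pos_iff (R := ℚ_[ℓ])).1 (by omega)
  -- forward direction: analysis of the kernel
  have main : extPow k g = 1 → ∃ c : ℚ_[ℓ], (c = 1 ∨ c = -1) ∧ c ^ k = 1 ∧
      g = c • (1 : Module.End ℚ_[ℓ] V) := by
    intro hex
    rw [extPow_eq_one_iff] at hex
    -- Step 1: every vector is an eigenvector
    have step1 : ∀ v : V, ∃ c : ℚ_[ℓ], g v = c • v := by
      intro v
      by_cases hv : v = 0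
      · exact ⟨0, by simp [hv]⟩
      have hli : LinearIndepOn ℚ_[ℓ] id ({v} : Set V) :=
        LinearIndepOn.singleton (v := id) hv
      let b := Module.Basis.extend hli
      letI : Fintype (hli.extend (Set.subset_univ ({v} : Set V))) :=
        FiniteDimensional.fintypeBasisIndex b
      have hbcoe : ∀ i, b i = (i : V) := fun i => congrFun (Module.Basis.coe_extend hli) i
      have hvmem : v ∈ hli.extend (Set.subset_univ ({v} : Set V)) :=
        hli.subset_extend _ rfl
      set i0 : (hli.extend (Set.subset_univ ({v} : Set V))) := ⟨v, hvmem⟩ with hi0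
      have hcard : k + 1 ≤ Fintype.card (hli.extend (Set.subset_univ ({v} : Set V))) := by
        rw [← Module.finrank_eq_card_basis b]
        omega
      have hrepr : ∀ j, j ≠ i0 → b.repr (g v) j = 0 := by
        intro j hj
        obtain ⟨σ, hσinj, hσ0, hjσ⟩ := exists_sigma hk hcard i0 j (Ne.symm hj)
        apply repr_eq_zero_of_wedge b hσinj hjσ
        have h1 : ιMulti ℚ_[ℓ] (k + 1) (Fin.cons v (fun i => b (σ i))) = 0 := by
          apply AlternatingMap.map_eq_zero_of_eq (i := 0) (j := Fin.succ ⟨0, hk⟩)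
          · rw [Fin.cons_zero, Fin.cons_succ, hσ0, hbcoe]
          · exact (Fin.succ_ne_zero _).symm
        have h2 := congrArg (ExteriorAlgebra.map g) h1
        rw [map_zero, ExteriorAlgebra.map_apply_ιMulti] at h2
        have hcomp : (⇑g ∘ Fin.cons v (fun i => b (σ i)))
            = Fin.cons (g v) (fun i => g (b (σ i))) := by
          funext i
          induction i using Fin.cases with
          | zero => simp [Fin.cons_zero]
          | succ i => simp [Fin.cons_succ]
        rw [hcomp, ιMulti_cons] at h2
        have h3 : ιMulti ℚ_[ℓ] k (fun i => g (b (σ i))) = ιMulti ℚ_[ℓ] k (fun i => b (σ i)) := by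
          have h4 := hex (fun i => b (σ i))
          rw [ExteriorAlgebra.map_apply_ιMulti, Function.comp_def] at h4
          exact h4
        rw [h3, ← ιMulti_cons] at h2
        exact h2
      refine ⟨b.repr (g v) i0, ?_⟩
      have hsum := b.sum_repr (g v)
      rw [Finset.sum_eq_single i0 (fun j _ hj => by rw [hrepr j hj, zero_smul])
        (fun h => absurd (Finset.mem_univ i0) h)] at hsum
      exact hsum.symm.trans (by rw [hbcoe i0])
    -- Step 2: hence g is scalar
    obtain ⟨c, hg⟩ := eq_smul_one_of_forall step1
    obtain ⟨x0, hx0⟩ := exists_ne (0 : V)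
    obtain ⟨y0, hy0⟩ : ∃ y, B x0 y ≠ 0 := by
      by_contra hcon
      push_neg at hcon
      exact hx0 (hB.1 x0 fun y => hcon y)
    have hc2 : c ^ 2 = 1 := by
      have h5 := hgB x0 y0
      rw [hg] at h5
      simp only [LinearMap.smul_apply, Module.End.one_apply, map_smul, smul_eq_mul] at h5
      have h4 : (c ^ 2 - 1) * B x0 y0 = 0 := by ring_nf; linear_combination h5
      rcases mul_eq_zero.1 h4 with h | h
      · exact sub_eq_zero.1 h
      · exact absurd h hy0
    have hc18 : c = 1 ∨ c = -1 := by
      have h4 : (c - 1) * (c + 1) = 0 := by linear_combination hc2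
      rcases mul_eq_zero.1 h4 with h | h
      · exact Or.inl (sub_eq_zero.1 h)
      · exact Or.inr (eq_neg_of_add_eq_zero_left h)
    have hck : c ^ k = 1 := by
      let b := Module.finBasis ℚ_[ℓ] V
      obtain ⟨f⟩ : Nonempty (Fin k ↪ Fin (Module.finrank ℚ_[ℓ] V)) :=
        Function.Embedding.nonempty_of_card_le (by simpa using le_of_lt hk')
      have hne := ιMulti_ne_zero b (σ := ⇑f) f.injective
      have h6 := hex fun i => b (f i)
      rw [ExteriorAlgebra.map_apply_ιMulti, Function.comp_def] at h6
      simp only [hg, LinearMap.smul_apply, Module.End.one_apply] at h6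
      have hsm := (ιMulti ℚ_[ℓ] k (M := V)).toMultilinearMap.map_smul_univ
        (fun _ => c) (fun i => b (f i))
      simp only [AlternatingMap.coe_multilinearMap] at hsm
      rw [hsm, Finset.prod_const, Finset.card_univ, Fintype.card_fin] at h6
      have h5 : (c ^ k - 1) • ιMulti ℚ_[ℓ] k (fun i => b (f i)) = 0 := by
        rw [sub_smul, h6, one_smul, sub_self]
      rcases smul_eq_zero.1 h5 with h | h
      · exact sub_eq_zero.1 h
      · exact absurd h hne
    exact ⟨c, hc18, hck, hg⟩
  -- converse: scalars with `c ^ k = 1` act trivially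
  have conv : ∀ c : ℚ_[ℓ], c ^ k = 1 → extPow k (c • (1 : Module.End ℚ_[ℓ] V)) = 1 := by
    intro c hc
    rw [extPow_eq_one_iff]
    intro v
    rw [ExteriorAlgebra.map_apply_ιMulti, Function.comp_def]
    simp only [LinearMap.smul_apply, Module.End.one_apply]
    have hsm := (ιMulti ℚ_[ℓ] k (M := V)).toMultilinearMap.map_smul_univ (fun _ => c) v
    simp only [AlternatingMap.coe_multilinearMap] at hsm
    rw [hsm, Finset.prod_const, Finset.card_univ, Fintype.card_fin, hc, one_smul]
  constructor
  · intro hodd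
    constructor
    · intro h
      obtain ⟨c, hc18, hck, hg⟩ := main h
      rcases hc18 with rfl | rfl
      · rw [hg, one_smul]
      · exfalso
        rw [Odd.neg_one_pow hodd] at hck
        norm_num at hck
    · rintro rfl
      have := conv 1 (one_pow k)
      rwa [one_smul] at this
  · intro heven
    constructor
    · intro h
      obtain ⟨c, hc18, hck, hg⟩ := main h
      rcases hc18 with rfl | rfl
      · exact Or.inl (by rw [hg, one_smul])
      · exact Or.inr (by rw [hg, neg_smul, one_smul])
    · rintro (rfl | rfl)
      · have := conv 1 (one_pow k)
        rwa [one_smul] at this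
      · have := conv (-1) (Even.neg_one_pow heven)
        rwa [neg_smul, one_smul] at this
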